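/- arXiv:2003.10312 — 5 statements merged into one kernel-verified Lean document; each statement's English description precedes it below -/
import Mathlib

section
/- Let g : [0, ∞) → ℝ be a convex function with a minimizer at ρ* > 0. Assume g is twice differentiable on [3ρ*/4, 5ρ*/4] and there exists B > 0 such that g''(ρ) ≥ B for all ρ in this interval. Then for all ρ ≥ 0 with ρ ∉ [ρ*/2, 3ρ*/2], we have g(ρ) − g(ρ*) ≥ (ρ*·B/8)·|ρ − ρ*|. -/
set_option maxHeartbeats 1000000

theorem convex_linear_growth (g g' g'' : ℝ → ℝ) (ρstar B : ℝ)
    (hρ : 0 < ρstar) (hB : 0 < B)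
    (hconv : ConvexOn ℝ (Set.Ici 0) g)
    (hmin : ∀ ρ ∈ Set.Ici (0 : ℝ), g ρstar ≤ g ρ)
    (hderiv : ∀ ρ ∈ Set.Icc (3 / 4 * ρstar) (5 / 4 * ρstar), HasDerivAt g (g' ρ) ρ)
    (hderiv2 : ∀ ρ ∈ Set.Icc (3 / 4 * ρstar) (5 / 4 * ρstar), HasDerivAt g' (g'' ρ) ρ)
    (hlow : ∀ ρ ∈ Set.Icc (3 / 4 * ρstar) (5 / 4 * ρstar), B ≤ g'' ρ) :
    ∀ ρ : ℝ, 0 ≤ ρ → ρ ∉ Set.Icc (1 / 2 * ρstar) (3 / 2 * ρstar) →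
      ρstar * B / 8 * |ρ - ρstar| ≤ g ρ - g ρstar := by
  set I : Set ℝ := Set.Icc (3 / 4 * ρstar) (5 / 4 * ρstar) with hI
  have hρI : ρstar ∈ I := by constructor <;> nlinarith
  -- g' ρstar = 0
  have gp0 : g' ρstar = 0 := by
    have hloc : IsLocalMin g ρstar := by
      have : Set.Ici (0:ℝ) ∈ nhds ρstar :=
        Filter.mem_of_superset (Ioi_mem_nhds hρ) Set.Ioi_subset_Ici_self
      exact Filter.eventually_iff_exists_mem.2 ⟨_, this, fun y hy => hmin y hy⟩
    exact hloc.hasDerivAt_eq_zero (hderiv ρstar hρI)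
  -- φ = g' - B(x - ρ*)
  set φ : ℝ → ℝ := fun x => g' x - B * (x - ρstar) with hφ
  have hφderiv : ∀ x ∈ I, HasDerivAt φ (g'' x - B) x := fun x hx => by
    have := (hderiv2 x hx).sub (((hasDerivAt_id x).sub_const ρstar).const_mul B)
    simp only [mul_one] at this
    exact this
  have hφmono : MonotoneOn φ I := by
    apply monotoneOn_of_deriv_nonneg (convex_Icc _ _)
    · exact fun x hx => (hφderiv x hx).continuousAt.continuousWithinAt
    · intro x hx
      rw [interior_Icc] at hx
      exact (hφderiv x (Set.mem_Icc_of_Ioo hx)).differentiableAt.differentiableWithinAt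
    · intro x hx
      rw [interior_Icc] at hx
      rw [(hφderiv x (Set.mem_Icc_of_Ioo hx)).deriv]
      linarith [hlow x (Set.mem_Icc_of_Ioo hx)]
  have hφ0 : φ ρstar = 0 := by simp [hφ, gp0]
  -- h = g - B/2 (x - ρ*)^2
  set h : ℝ → ℝ := fun x => g x - B / 2 * (x - ρstar) ^ 2 with hh
  have hhderiv : ∀ x ∈ I, HasDerivAt h (φ x) x := fun x hx => by
    have : HasDerivAt h (g' x - B / 2 * (2 * (x - ρstar) ^ 1 * 1)) x :=
      (hderiv x hx).sub ((((hasDerivAt_id x).sub_const ρstar).pow 2).const_mul (B / 2))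
    convert this using 1
    simp [hφ]; ring
  have hcont : ∀ x ∈ I, ContinuousWithinAt h I x := fun x hx =>
    (hhderiv x hx).continuousAt.continuousWithinAt
  -- right side: h monotone on [ρ*, 5/4 ρ*]
  have hsub1 : Set.Icc ρstar (5 / 4 * ρstar) ⊆ I := by
    apply Set.Icc_subset_Icc_left; nlinarith
  have hmono1 : MonotoneOn h (Set.Icc ρstar (5 / 4 * ρstar)) := by
    apply monotoneOn_of_deriv_nonneg (convex_Icc _ _)
    · exact fun x hx => (hcont x (hsub1 hx)).mono hsub1
    · intro x hx
      rw [interior_Icc] at hx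
      exact (hhderiv x (hsub1 (Set.mem_Icc_of_Ioo hx))).differentiableAt.differentiableWithinAt
    · intro x hx
      rw [interior_Icc] at hx
      rw [(hhderiv x (hsub1 (Set.mem_Icc_of_Ioo hx))).deriv]
      have := hφmono hρI (hsub1 (Set.mem_Icc_of_Ioo hx)) hx.1.le
      linarith [hφ0 ▸ this]
  have key1 : B * ρstar ^ 2 / 32 ≤ g (5 / 4 * ρstar) - g ρstar := by
    have := hmono1 (Set.left_mem_Icc.2 (by nlinarith)) (Set.right_mem_Icc.2 (by nlinarith))
      (by nlinarith)
    simp only [hh] at this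
    nlinarith [this]
  -- left side: h antitone on [3/4 ρ*, ρ*]
  have hsub2 : Set.Icc (3 / 4 * ρstar) ρstar ⊆ I := by
    apply Set.Icc_subset_Icc_right; nlinarith
  have hmono2 : AntitoneOn h (Set.Icc (3 / 4 * ρstar) ρstar) := by
    apply antitoneOn_of_deriv_nonpos (convex_Icc _ _)
    · exact fun x hx => (hcont x (hsub2 hx)).mono hsub2
    · intro x hx
      rw [interior_Icc] at hx
      exact (hhderiv x (hsub2 (Set.mem_Icc_of_Ioo hx))).differentiableAt.differentiableWithinAt
    · intro x hx
      rw [interior_Icc] at hx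
      rw [(hhderiv x (hsub2 (Set.mem_Icc_of_Ioo hx))).deriv]
      have := hφmono (hsub2 (Set.mem_Icc_of_Ioo hx)) hρI hx.2.le
      linarith [hφ0 ▸ this]
  have key2 : B * ρstar ^ 2 / 32 ≤ g (3 / 4 * ρstar) - g ρstar := by
    have := hmono2 (Set.left_mem_Icc.2 (by nlinarith)) (Set.right_mem_Icc.2 (by nlinarith))
      (by nlinarith)
    simp only [hh] at this
    nlinarith [this]
  -- main argument
  intro ρ hρ0 hρnot
  have h34 : (0:ℝ) ≤ 3 / 4 * ρstar := by nlinarith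
  have h54 : (0:ℝ) ≤ 5 / 4 * ρstar := by nlinarith
  rcases not_and_or.1 (Set.mem_Icc.not.1 hρnot) with hlt | hgt
  · -- ρ < ρ*/2
    push_neg at hlt
    have habs : |ρ - ρstar| = ρstar - ρ := by rw [abs_of_nonpos (by nlinarith)]; ring
    have hsec := hconv.secant_mono (a := ρstar) (x := ρ) (y := 3 / 4 * ρstar)
      (Set.mem_Ici.2 hρ.le) (Set.mem_Ici.2 hρ0) (Set.mem_Ici.2 h34)
      (ne_of_lt (by nlinarith)) (ne_of_lt (by nlinarith)) (by nlinarith)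
    rw [habs]
    have e1 : (g ρ - g ρstar) / (ρ - ρstar) = (g ρstar - g ρ) / (ρstar - ρ) := by
      rw [← neg_div_neg_eq]; ring_nf
    have e2 : (g (3 / 4 * ρstar) - g ρstar) / (3 / 4 * ρstar - ρstar)
        = (g ρstar - g (3 / 4 * ρstar)) / (ρstar - 3 / 4 * ρstar) := by
      rw [← neg_div_neg_eq]; ring_nf
    rw [e1, e2] at hsec
    have hd1 : (0:ℝ) < ρstar - ρ := by nlinarith
    have hd2 : (0:ℝ) < ρstar - 3 / 4 * ρstar := by nlinarith
    rw [div_le_div_iff₀ hd1 hd2] at hsec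
    have hfinal : ρstar * B / 8 * (ρstar - ρ) * (ρstar / 4) ≤ (g ρ - g ρstar) * (ρstar / 4) := by
      nlinarith [hsec, mul_le_mul_of_nonneg_right key2 hd1.le]
    exact le_of_mul_le_mul_right hfinal (by positivity)
  · -- ρ > 3/2 ρ*
    push_neg at hgt
    have habs : |ρ - ρstar| = ρ - ρstar := by rw [abs_of_nonneg (by nlinarith)]
    have hsec := hconv.secant_mono (a := ρstar) (x := 5 / 4 * ρstar) (y := ρ)
      (Set.mem_Ici.2 hρ.le) (Set.mem_Ici.2 h54) (Set.mem_Ici.2 hρ0)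
      (ne_of_gt (by nlinarith)) (ne_of_gt (by nlinarith)) (by nlinarith)
    rw [habs]
    have hd1 : (0:ℝ) < 5 / 4 * ρstar - ρstar := by nlinarith
    have hd2 : (0:ℝ) < ρ - ρstar := by nlinarith
    rw [div_le_div_iff₀ hd1 hd2] at hsec
    have hfinal : ρstar * B / 8 * (ρ - ρstar) * (ρstar / 4) ≤ (g ρ - g ρstar) * (ρstar / 4) := by
      nlinarith [hsec, mul_le_mul_of_nonneg_right key1 hd2.le]
    exact le_of_mul_le_mul_right hfinal (by positivity)
end

section
/- Let ξ be a Gaussian vector on ℝᵈ with mean μ ≠ 0 and covariance σ²·I with σ > 0. Then the set of maximizers over θ of P(ξᵀθ > 0) is exactly {λμ : λ > 0}. -/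
open MeasureTheory ProbabilityTheory
open scoped InnerProductSpace

/-- `ξ` is a Gaussian random vector on `ℝᵈ` with mean `μ` and covariance `σ² I`:
every linear functional `⟪v, ξ⟫` has law `N(⟪v, μ⟫, σ²‖v‖²)`. -/
def IsGaussianVec {Ω : Type*} [MeasurableSpace Ω] {d : ℕ} (P : Measure Ω)
    (ξ : Ω → EuclideanSpace ℝ (Fin d)) (μ : EuclideanSpace ℝ (Fin d)) (σ : ℝ) : Prop :=
  ∀ v : EuclideanSpace ℝ (Fin d),
    Measure.map (fun ω => ⟪v, ξ ω⟫_ℝ) P =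
      gaussianReal ⟪v, μ⟫_ℝ ((σ ^ 2 * ‖v‖ ^ 2).toNNReal)

lemma gauss_Ioi_eq (m c : ℝ) (hc : 0 < c) :
    gaussianReal m ((c ^ 2).toNNReal) (Set.Ioi 0)
      = gaussianReal 0 1 (Set.Ioi (-(m / c))) := by
  have hv : ((c ^ 2).toNNReal : NNReal) = ⟨c ^ 2, sq_nonneg c⟩ * 1 := by
    ext; simp [Real.toNNReal, sq_nonneg c, max_eq_left (sq_nonneg c)]; exact (mul_one (c ^ 2)).symm
  have hmap : gaussianReal m ((c ^ 2).toNNReal)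
      = Measure.map (fun x => c * x + m) (gaussianReal 0 1) := by
    have : (fun x : ℝ => c * x + m) = (· + m) ∘ (c * ·) := rfl
    rw [this, ← Measure.map_map (measurable_add_const m) (measurable_const_mul c),
      gaussianReal_map_const_mul, gaussianReal_map_add_const]
    rw [hv]
    norm_num
    exact congrArg _ (NNReal.eq (mul_one (c ^ 2)))
  rw [hmap, Measure.map_apply ((measurable_const_mul c).add_const m) measurableSet_Ioi]
  congr 1
  ext x
  simp only [Set.mem_preimage, Set.mem_Ioi]
  rw [← neg_div, div_lt_iff₀ hc]
  constructor <;> intro h <;> nlinarith [mul_comm c x]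

lemma gauss_Ioi_lt {a b : ℝ} (hab : a < b) :
    gaussianReal 0 1 (Set.Ioi b) < gaussianReal 0 1 (Set.Ioi a) := by
  have hunion : Set.Ioc a b ∪ Set.Ioi b = Set.Ioi a := Set.Ioc_union_Ioi_eq_Ioi hab.le
  have hdisj : Disjoint (Set.Ioc a b) (Set.Ioi b) := Set.Ioc_disjoint_Ioi le_rfl
  have hmeas : gaussianReal 0 1 (Set.Ioi a)
      = gaussianReal 0 1 (Set.Ioc a b) + gaussianReal 0 1 (Set.Ioi b) := by
    rw [← hunion, measure_union hdisj measurableSet_Ioi]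
  have hIoc : gaussianReal 0 1 (Set.Ioc a b) ≠ 0 := by
    intro h0
    have := gaussianReal_absolutelyContinuous' 0 (one_ne_zero) h0
    rw [Real.volume_Ioc] at this
    simp [sub_pos.mpr hab, ENNReal.ofReal_eq_zero, not_lt.mpr (sub_pos.mpr hab).le] at this
    linarith
  have hfin : gaussianReal 0 1 (Set.Ioi b) ≠ ⊤ := measure_ne_top _ _
  rw [hmeas]
  calc gaussianReal 0 1 (Set.Ioi b)
      < gaussianReal 0 1 (Set.Ioi b) + gaussianReal 0 1 (Set.Ioc a b) :=
        ENNReal.lt_add_right hfin hIoc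
    _ = _ := add_comm _ _

theorem optimal_classifiers_characterization
    {Ω : Type*} [MeasurableSpace Ω] {d : ℕ} (P : Measure Ω) [IsProbabilityMeasure P]
    (ξ : Ω → EuclideanSpace ℝ (Fin d)) (μ : EuclideanSpace ℝ (Fin d)) (σ : ℝ)
    (hσ : 0 < σ) (hμ : μ ≠ 0) (hmeas : Measurable ξ) (hξ : IsGaussianVec P ξ μ σ) :
    {θ : EuclideanSpace ℝ (Fin d) |
        ∀ θ' : EuclideanSpace ℝ (Fin d),
          P {ω | 0 < ⟪θ', ξ ω⟫_ℝ} ≤ P {ω | 0 < ⟪θ, ξ ω⟫_ℝ}} =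
      {θ : EuclideanSpace ℝ (Fin d) | ∃ l : ℝ, 0 < l ∧ θ = l • μ} := by
  have hμn : 0 < ‖μ‖ := norm_pos_iff.mpr hμ
  -- the key formula for θ ≠ 0
  have key : ∀ θ : EuclideanSpace ℝ (Fin d), θ ≠ 0 →
      P {ω | 0 < ⟪θ, ξ ω⟫_ℝ}
        = gaussianReal 0 1 (Set.Ioi (-(⟪θ, μ⟫_ℝ / (σ * ‖θ‖)))) := by
    intro θ hθ
    have hc : 0 < σ * ‖θ‖ := mul_pos hσ (norm_pos_iff.mpr hθ)
    have hmble : Measurable (fun ω => ⟪θ, ξ ω⟫_ℝ) :=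
      ((innerSL ℝ θ).continuous.measurable).comp hmeas
    have h1 : P {ω | 0 < ⟪θ, ξ ω⟫_ℝ}
        = Measure.map (fun ω => ⟪θ, ξ ω⟫_ℝ) P (Set.Ioi 0) := by
      rw [Measure.map_apply hmble measurableSet_Ioi]
      rfl
    have h2 : (σ ^ 2 * ‖θ‖ ^ 2 : ℝ) = (σ * ‖θ‖) ^ 2 := by ring
    rw [h1, hξ θ, h2, gauss_Ioi_eq _ _ hc]
  have key0 : P {ω | 0 < ⟪(0 : EuclideanSpace ℝ (Fin d)), ξ ω⟫_ℝ} = 0 := by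
    have : {ω | 0 < ⟪(0 : EuclideanSpace ℝ (Fin d)), ξ ω⟫_ℝ} = (∅ : Set Ω) := by
      ext ω; simp [inner_zero_left]
    rw [this, measure_empty]
  have hratμ : ⟪μ, μ⟫_ℝ / (σ * ‖μ‖) = ‖μ‖ / σ := by
    rw [real_inner_self_eq_norm_sq]
    field_simp
  ext θ
  simp only [Set.mem_setOf_eq]
  constructor
  · intro h
    have hθ0 : θ ≠ 0 := by
      intro h0
      have hle := h μ
      rw [h0, key0, key μ hμ, hratμ] at hle
      have : gaussianReal 0 1 (Set.Ioi (-(‖μ‖ / σ))) = 0 := le_antisymm hle zero_le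
      have hvol := gaussianReal_absolutelyContinuous' 0 one_ne_zero this
      rw [Real.volume_Ioi] at hvol
      exact ENNReal.top_ne_zero hvol
    have hle := h μ
    rw [key μ hμ, hratμ, key θ hθ0] at hle
    set r : ℝ := ⟪θ, μ⟫_ℝ / (σ * ‖θ‖) with hr
    have hθn : 0 < ‖θ‖ := norm_pos_iff.mpr hθ0
    have hrle : ‖μ‖ / σ ≤ r := by
      by_contra hlt
      push_neg at hlt
      have := gauss_Ioi_lt (neg_lt_neg hlt)
      exact absurd hle (not_le.mpr this)
    -- from r ≥ ‖μ‖/σ deduce ⟪θ, μ⟫ ≥ ‖θ‖ ‖μ‖, hence equality by Cauchy–Schwarz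
    have hinner_ge : ‖θ‖ * ‖μ‖ ≤ ⟪θ, μ⟫_ℝ := by
      have hc : 0 < σ * ‖θ‖ := mul_pos hσ hθn
      have := (div_le_div_iff₀ (by positivity) hc).mp hrle
      nlinarith
    have heq : ⟪θ, μ⟫_ℝ = ‖θ‖ * ‖μ‖ :=
      le_antisymm (real_inner_le_norm θ μ) hinner_ge
    have hsmul : ‖μ‖ • θ = ‖θ‖ • μ := inner_eq_norm_mul_iff_real.mp heq
    refine ⟨‖θ‖ / ‖μ‖, div_pos hθn hμn, ?_⟩
    rw [div_eq_inv_mul, mul_smul, ← hsmul, smul_smul, inv_mul_cancel₀ hμn.ne', one_smul]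
  · rintro ⟨l, hl, rfl⟩ θ'
    have hlμ : (l • μ : EuclideanSpace ℝ (Fin d)) ≠ 0 := by
      simp [smul_eq_zero, hl.ne', hμ]
    have hnorm : ‖(l • μ : EuclideanSpace ℝ (Fin d))‖ = l * ‖μ‖ := by
      rw [norm_smul, Real.norm_eq_abs, abs_of_pos hl]
    have hratl : ⟪(l • μ : EuclideanSpace ℝ (Fin d)), μ⟫_ℝ / (σ * ‖(l • μ : EuclideanSpace ℝ (Fin d))‖)
        = ‖μ‖ / σ := by
      rw [real_inner_smul_left, real_inner_self_eq_norm_sq, hnorm]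
      field_simp
    rw [key _ hlμ, hratl]
    by_cases hθ' : θ' = 0
    · rw [hθ', key0]; exact zero_le
    · rw [key θ' hθ']
      apply measure_mono
      apply Set.Ioi_subset_Ioi
      apply neg_le_neg
      have hθ'n : 0 < ‖θ'‖ := norm_pos_iff.mpr hθ'
      have hCS : ⟪θ', μ⟫_ℝ ≤ ‖θ'‖ * ‖μ‖ := real_inner_le_norm θ' μ
      rw [div_le_div_iff₀ (by positivity) hσ]
      nlinarith
end

section
/- Let ξ ~ N(μ, σ²I) on ℝᵈ with μ ≠ 0 and σ > 0, and define g(ρ) = −E[μᵀξ / (1 + exp(ρ·μᵀξ))]. Then g is strictly increasing in ρ, and g(2/σ²) = 0; consequently ρ* = 2/σ² is the unique zero of g. -/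
open MeasureTheory ProbabilityTheory Real
open scoped InnerProductSpace NNReal ENNReal

section Aux

/-- The identity is integrable with respect to a nondegenerate Gaussian. -/
lemma integrable_id_gaussianReal (m : ℝ) {v : ℝ≥0} (hv : v ≠ 0) :
    Integrable (fun x : ℝ => x) (gaussianReal m v) := by
  have hvpos : (0:ℝ) < (v:ℝ) := by positivity
  rw [gaussianReal_of_var_ne_zero _ hv,
    integrable_withDensity_iff (measurable_gaussianPDF m v)
      (ae_of_all _ fun x => ENNReal.ofReal_lt_top)]
  have hb : (0:ℝ) < (2 * (v:ℝ))⁻¹ := by positivity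
  set b : ℝ := (2 * (v:ℝ))⁻¹ with hbdef
  have base : Integrable (fun y : ℝ => (y + m) * Real.exp (-b * y ^ 2)) volume := by
    have h1 := integrable_mul_exp_neg_mul_sq hb
    have h2 := (integrable_exp_neg_mul_sq hb).const_mul m
    have := h1.add h2
    refine this.congr ?_
    filter_upwards with y
    simp only [Pi.add_apply]
    ring
  have shifted : Integrable (fun x : ℝ => x * Real.exp (-b * (x - m) ^ 2)) volume := by
    have := base.comp_sub_right m
    refine this.congr ?_
    filter_upwards with x
    simp [sub_add_cancel]
  have hexp : ∀ y : ℝ, -b * y ^ 2 = -y ^ 2 / (2 * (v:ℝ)) := fun y => by rw [hbdef]; ring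
  have := shifted.const_mul ((Real.sqrt (2 * Real.pi * (v:ℝ)))⁻¹)
  refine this.congr ?_
  filter_upwards with x
  rw [gaussianPDF, ENNReal.toReal_ofReal (gaussianPDFReal_nonneg m v x), gaussianPDFReal,
    hexp]
  ring

/-- The logistic-type integrand is integrable against a nondegenerate Gaussian. -/
lemma integrable_logistic_gaussianReal (m : ℝ) {v : ℝ≥0} (hv : v ≠ 0) (ρ : ℝ) :
    Integrable (fun x : ℝ => x / (1 + Real.exp (ρ * x))) (gaussianReal m v) := by
  have hcont : Continuous fun x : ℝ => x / (1 + Real.exp (ρ * x)) := by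
    refine continuous_id.div (by continuity) fun x => ?_
    positivity
  refine (integrable_id_gaussianReal m hv).mono hcont.aestronglyMeasurable ?_
  filter_upwards with x
  have h1 : (0:ℝ) < 1 + Real.exp (ρ * x) := by positivity
  rw [Real.norm_eq_abs, Real.norm_eq_abs, abs_div, abs_of_pos h1]
  calc |x| / (1 + Real.exp (ρ * x)) ≤ |x| / 1 := by
        apply div_le_div_of_nonneg_left (abs_nonneg x) one_pos
        simp [(Real.exp_pos (ρ * x)).le]
    _ = |x| := by simp

lemma logistic_pos_sub {ρ₁ ρ₂ x : ℝ} (h : ρ₁ < ρ₂) (hx : x ≠ 0) :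
    0 < x / (1 + Real.exp (ρ₁ * x)) - x / (1 + Real.exp (ρ₂ * x)) := by
  have d1 : (0:ℝ) < 1 + Real.exp (ρ₁ * x) := by positivity
  have d2 : (0:ℝ) < 1 + Real.exp (ρ₂ * x) := by positivity
  rw [div_sub_div _ _ d1.ne' d2.ne']
  apply div_pos _ (mul_pos d1 d2)
  have : x * (1 + Real.exp (ρ₂ * x)) - (1 + Real.exp (ρ₁ * x)) * x
      = x * (Real.exp (ρ₂ * x) - Real.exp (ρ₁ * x)) := by ring
  rw [this]
  rcases lt_or_gt_of_ne hx with hneg | hpos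
  · apply mul_pos_of_neg_of_neg hneg
    rw [sub_neg]
    exact Real.exp_lt_exp.mpr (by nlinarith)
  · apply mul_pos hpos
    rw [sub_pos]
    exact Real.exp_lt_exp.mpr (by nlinarith)

/-- The Gaussian symmetry identity: at `ρ = 2/σ²` the integral vanishes. -/
lemma gauss_integral_zero (m σ : ℝ) (hm : 0 < m) (hσ : 0 < σ) :
    ∫ x, x / (1 + Real.exp ((2 / σ ^ 2) * x)) ∂(gaussianReal m ((σ ^ 2 * m).toNNReal)) = 0 := by
  set v : ℝ≥0 := (σ ^ 2 * m).toNNReal with hvdef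
  have hvR : (v:ℝ) = σ ^ 2 * m := by
    rw [hvdef, Real.coe_toNNReal _ (by positivity)]
  have hv : v ≠ 0 := by
    intro h
    have h2 : (v:ℝ) = 0 := by simp [h]
    rw [hvR] at h2
    have hpos : (0:ℝ) < σ ^ 2 * m := by positivity
    linarith
  set ρ : ℝ := 2 / σ ^ 2 with hρdef
  have hpdf : gaussianPDF m v = fun x => ((gaussianPDFReal m v x).toNNReal : ℝ≥0∞) := rfl
  rw [gaussianReal_of_var_ne_zero _ hv, hpdf,
    integral_withDensity_eq_integral_smul ((measurable_gaussianPDFReal m v).real_toNNReal)]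
  set F : ℝ → ℝ := fun x => (gaussianPDFReal m v x).toNNReal • (x / (1 + Real.exp (ρ * x))) with hF
  have hkey : ∀ x, F (-x) = -F x := by
    intro x
    have h1 : (0:ℝ) < 1 + Real.exp (ρ * x) := by positivity
    have hprod : Real.exp (-(ρ * x)) * Real.exp (ρ * x) = 1 := by
      rw [← Real.exp_add]; simp
    have hstep : Real.exp (-(ρ * x)) * (-x / (1 + Real.exp (-(ρ * x))))
        = -(x / (1 + Real.exp (ρ * x))) := by
      have h2 : (0:ℝ) < 1 + Real.exp (-(ρ * x)) := by positivity
      field_simp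
      linear_combination (-x) * hprod
    simp only [hF, NNReal.smul_def, smul_eq_mul]
    rw [Real.coe_toNNReal _ (gaussianPDFReal_nonneg m v (-x)),
      Real.coe_toNNReal _ (gaussianPDFReal_nonneg m v x)]
    simp only [gaussianPDFReal]
    have hexp : (-(-x - m) ^ 2 / (2 * (v:ℝ))) = (-(x - m) ^ 2 / (2 * (v:ℝ))) + (-(ρ * x)) := by
      rw [hvR, hρdef]
      field_simp
      ring
    rw [hexp, Real.exp_add, show ρ * -x = -(ρ * x) from by ring]
    linear_combination ((Real.sqrt (2 * Real.pi * (v:ℝ)))⁻¹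
      * Real.exp (-(x - m) ^ 2 / (2 * (v:ℝ)))) * hstep
  have hflip : ∫ x, F x = ∫ x, F (-x) := (integral_neg_eq_self F volume).symm
  have : ∫ x, F x = -∫ x, F x := by
    calc ∫ x, F x = ∫ x, F (-x) := hflip
      _ = ∫ x, -F x := by simp only [hkey]
      _ = -∫ x, F x := integral_neg F
  linarith

end Aux

theorem logistic_line_derivative_unique_zero
    {Ω : Type*} [MeasurableSpace Ω] {d : ℕ} (P : Measure Ω) [IsProbabilityMeasure P]
    (ξ : Ω → EuclideanSpace ℝ (Fin d)) (μ : EuclideanSpace ℝ (Fin d)) (σ : ℝ)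
    (hσ : 0 < σ) (hμ : μ ≠ 0) (hmeas : Measurable ξ) (hξ : IsGaussianVec P ξ μ σ)
    (g : ℝ → ℝ)
    (hg : ∀ ρ, g ρ = -∫ ω, ⟪μ, ξ ω⟫_ℝ / (1 + Real.exp (ρ * ⟪μ, ξ ω⟫_ℝ)) ∂P) :
    StrictMono g ∧ g (2 / σ ^ 2) = 0 ∧ ∀ ρ, g ρ = 0 → ρ = 2 / σ ^ 2 := by
  set m : ℝ := ‖μ‖ ^ 2 with hmdef
  have hm : 0 < m := by
    have : ‖μ‖ ≠ 0 := norm_ne_zero_iff.mpr hμ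
    positivity
  set v : ℝ≥0 := (σ ^ 2 * m).toNNReal with hvdef
  have hv : v ≠ 0 := by
    intro h
    have h2 : (v:ℝ) = 0 := by simp [h]
    rw [hvdef, Real.coe_toNNReal _ (by positivity)] at h2
    have hpos : (0:ℝ) < σ ^ 2 * m := by positivity
    linarith
  have hX : Measurable fun ω => ⟪μ, ξ ω⟫_ℝ := Measurable.inner measurable_const hmeas
  have hmap : Measure.map (fun ω => ⟪μ, ξ ω⟫_ℝ) P = gaussianReal m v := by
    have := hξ μ
    rwa [real_inner_self_eq_norm_sq] at this
  have hcont : ∀ ρ : ℝ, Continuous fun x : ℝ => x / (1 + Real.exp (ρ * x)) := by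
    intro ρ
    refine continuous_id.div (by continuity) fun x => ?_
    positivity
  have hrep : ∀ ρ, g ρ = -∫ x, x / (1 + Real.exp (ρ * x)) ∂(gaussianReal m v) := by
    intro ρ
    rw [hg]
    congr 1
    rw [← hmap, integral_map hX.aemeasurable (hcont ρ).aestronglyMeasurable]
  have hSM : StrictMono g := by
    intro ρ₁ ρ₂ hlt
    rw [hrep ρ₁, hrep ρ₂, neg_lt_neg_iff, ← sub_pos,
      ← integral_sub (integrable_logistic_gaussianReal m hv ρ₁)
        (integrable_logistic_gaussianReal m hv ρ₂)]
    set f : ℝ → ℝ := fun x => x / (1 + Real.exp (ρ₁ * x)) - x / (1 + Real.exp (ρ₂ * x)) with hf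
    have hnonneg : 0 ≤ f := by
      intro x
      rcases eq_or_ne x 0 with rfl | hx
      · simp [hf]
      · exact (logistic_pos_sub hlt hx).le
    have hint : Integrable f (gaussianReal m v) :=
      (integrable_logistic_gaussianReal m hv ρ₁).sub (integrable_logistic_gaussianReal m hv ρ₂)
    rw [integral_pos_iff_support_of_nonneg hnonneg hint]
    have hsub : ({0}ᶜ : Set ℝ) ⊆ Function.support f := by
      intro x hx
      exact (logistic_pos_sub hlt hx).ne'
    have h0 : gaussianReal m v ({0} : Set ℝ) = 0 :=
      gaussianReal_absolutelyContinuous m hv (measure_singleton 0)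
    have hcompl : gaussianReal m v ({0}ᶜ : Set ℝ) = 1 := by
      rw [measure_compl (measurableSet_singleton 0) (measure_ne_top _ _), h0, measure_univ]
      simp
    calc (0:ℝ≥0∞) < 1 := by norm_num
      _ = gaussianReal m v ({0}ᶜ : Set ℝ) := hcompl.symm
      _ ≤ gaussianReal m v (Function.support f) := measure_mono hsub
  have hzero : g (2 / σ ^ 2) = 0 := by
    rw [hrep, hvdef, gauss_integral_zero m σ hm hσ, neg_zero]
  exact ⟨hSM, hzero, fun ρ hρ => hSM.injective (by rw [hρ, hzero])⟩
end

section
/- Fix a step-size α > 0 and σ > 0. Let θ₀ = 0 and θ_k = θ_{k−1} + α·c_k·ξ_k where ξ_k are i.i.d. N(μ, σ²I) on ℝᵈ and c_k ∈ [0,1] is any F_{k−1}×σ(ξ_k)-measurable coefficient (covering logistic: c_k = 1/(1+exp(ξ_kᵀθ_{k−1})); and hinge: c_k = 1{ξ_kᵀθ_{k−1} ≤ 1}). Let v be a unit vector with vᵀμ = 0, and let T be a stopping time (w.r.t. the natural filtration) with E[T] < ∞. Then E[|vᵀθ_T|] ≤ σ·α·√(2/π)·E[T]. -/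
open MeasureTheory ProbabilityTheory
open scoped InnerProductSpace


lemma my_integral_mul_exp_neg_mul_sq_Ioi {b : ℝ} (hb : 0 < b) :
    ∫ x in Set.Ioi (0:ℝ), x * Real.exp (-b * x ^ 2) = (2 * b)⁻¹ := by
  have A : ∀ x : ℝ, HasDerivAt (fun y => -(2 * b)⁻¹ * Real.exp (-b * y ^ 2))
      (x * Real.exp (-b * x ^ 2)) x := by
    intro x
    convert ((hasDerivAt_pow 2 x).const_mul (-b)).exp.const_mul (-(2 * b)⁻¹) using 1
    · rfl
    · rfl
    field_simp
    ring
  have B : Filter.Tendsto (fun y : ℝ => -(2 * b)⁻¹ * Real.exp (-b * y ^ 2))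
      Filter.atTop (nhds (-(2 * b)⁻¹ * 0)) := by
    refine Filter.Tendsto.const_mul _ ?_
    exact Real.tendsto_exp_atBot.comp
      ((Filter.tendsto_pow_atTop two_ne_zero).const_mul_atTop_of_neg (neg_lt_zero.2 hb))
  have h := integral_Ioi_of_hasDerivAt_of_tendsto' (a := (0:ℝ)) (fun x _ => A x)
    (integrable_mul_exp_neg_mul_sq hb).integrableOn B
  rw [h]
  simp [Real.exp_zero]

lemma my_lintegral_abs_gaussianReal {σ : ℝ} (hσ : 0 < σ) :
    ∫⁻ x, ENNReal.ofReal |x| ∂(gaussianReal 0 ((σ^2 : ℝ)).toNNReal)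
      = ENNReal.ofReal (σ * Real.sqrt (2 / Real.pi)) := by
  have hπ := Real.pi_pos
  set v : NNReal := ((σ^2 : ℝ)).toNNReal with hv
  have hv0 : v ≠ 0 := by
    simp [hv, Real.toNNReal_eq_zero, not_le, pow_pos hσ, hσ.ne']
  have hvr : (v : ℝ) = σ ^ 2 := Real.coe_toNNReal _ (sq_nonneg σ)
  set b : ℝ := (2 * σ^2)⁻¹ with hb
  have hbpos : 0 < b := by positivity
  have hpdf : ∀ x : ℝ, gaussianPDFReal 0 v x
      = (Real.sqrt (2 * Real.pi * σ^2))⁻¹ * Real.exp (-b * x^2) := by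
    intro x
    simp only [gaussianPDFReal, hvr, sub_zero]
    have : -x^2/(2*σ^2) = -b * x^2 := by rw [hb, div_eq_mul_inv]; ring
    rw [this]
  have hint : Integrable (fun x : ℝ => gaussianPDFReal 0 v x * |x|) := by
    have h1 : Integrable (fun x : ℝ => x * Real.exp (-b * x ^ 2)) :=
      integrable_mul_exp_neg_mul_sq hbpos
    have h2 := h1.abs.const_mul (Real.sqrt (2 * Real.pi * σ^2))⁻¹
    refine h2.congr (Filter.Eventually.of_forall fun x => ?_)
    simp only [hpdf x, abs_mul, abs_of_nonneg (Real.exp_pos _).le]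
    ring
  have hval : ∫ x : ℝ, gaussianPDFReal 0 v x * |x| = σ * Real.sqrt (2 / Real.pi) := by
    have heq : ∀ x : ℝ, gaussianPDFReal 0 v x * |x|
        = (Real.sqrt (2 * Real.pi * σ^2))⁻¹ * (|x| * Real.exp (-b * |x|^2)) := by
      intro x; rw [hpdf x, sq_abs]; ring
    calc ∫ x : ℝ, gaussianPDFReal 0 v x * |x|
        = ∫ x : ℝ, (Real.sqrt (2 * Real.pi * σ^2))⁻¹ * (|x| * Real.exp (-b * |x|^2)) :=
          integral_congr_ae (Filter.Eventually.of_forall heq)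
      _ = (Real.sqrt (2 * Real.pi * σ^2))⁻¹ * ∫ x : ℝ, |x| * Real.exp (-b * |x|^2) :=
          integral_const_mul _ _
      _ = (Real.sqrt (2 * Real.pi * σ^2))⁻¹ *
            (2 * ∫ x in Set.Ioi (0:ℝ), x * Real.exp (-b * x^2)) := by
          rw [integral_comp_abs (f := fun t => t * Real.exp (-b * t^2))]
      _ = (Real.sqrt (2 * Real.pi * σ^2))⁻¹ * (2 * (2 * b)⁻¹) := by
          rw [my_integral_mul_exp_neg_mul_sq_Ioi hbpos]
      _ = σ * Real.sqrt (2 / Real.pi) := by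
          have h2b : (2 * b)⁻¹ = σ^2 := by rw [hb]; field_simp
          have hsqq : Real.sqrt (2 * Real.pi * σ^2) = σ * (Real.sqrt 2 * Real.sqrt Real.pi) := by
            rw [show 2*Real.pi*σ^2 = σ^2 * (2*Real.pi) by ring, Real.sqrt_mul (sq_nonneg σ),
              Real.sqrt_sq hσ.le, Real.sqrt_mul (by norm_num : (0:ℝ) ≤ 2)]
          have hdiv : Real.sqrt (2 / Real.pi) = Real.sqrt 2 / Real.sqrt Real.pi :=
            Real.sqrt_div' 2 hπ.le
          rw [h2b, hsqq, hdiv]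
          have hs2 : Real.sqrt 2 * Real.sqrt 2 = 2 := Real.mul_self_sqrt (by norm_num)
          have hsπ : Real.sqrt Real.pi ≠ 0 := ne_of_gt (Real.sqrt_pos.mpr hπ)
          have hs2' : Real.sqrt 2 ≠ 0 := by positivity
          field_simp
          linear_combination (-1 : ℝ) * hs2
  rw [gaussianReal_of_var_ne_zero 0 hv0,
    lintegral_withDensity_eq_lintegral_mul _ (measurable_gaussianPDF 0 v)
      (measurable_abs.ennreal_ofReal)]
  have : ∀ x : ℝ, (gaussianPDF 0 v * fun x => ENNReal.ofReal |x|) x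
      = ENNReal.ofReal (gaussianPDFReal 0 v x * |x|) := by
    intro x
    simp [gaussianPDF, ENNReal.ofReal_mul (gaussianPDFReal_nonneg 0 v x)]
  rw [lintegral_congr this, ← ofReal_integral_eq_lintegral_ofReal hint
    (Filter.Eventually.of_forall fun x => mul_nonneg (gaussianPDFReal_nonneg 0 v x) (abs_nonneg x)),
    hval]

theorem sgd_angle_bound
    {Ω : Type*} {m0 : MeasurableSpace Ω} (P : Measure Ω) [IsProbabilityMeasure P]
    {d : ℕ} (μ : EuclideanSpace ℝ (Fin d)) (σ α : ℝ) (hσ : 0 < σ) (hα : 0 < α)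
    (ξ : ℕ → Ω → EuclideanSpace ℝ (Fin d))
    (hmeas : ∀ k, StronglyMeasurable (ξ k))
    (hindep : iIndepFun ξ P)
    (hgauss : ∀ k, IsGaussianVec P (ξ k) μ σ)
    (c : ℕ → Ω → ℝ) (hc01 : ∀ k ω, c k ω ∈ Set.Icc (0 : ℝ) 1)
    (hcmeas : ∀ k, Measurable[(MeasureTheory.Filtration.natural ξ hmeas) k] (c k))
    (θ : ℕ → Ω → EuclideanSpace ℝ (Fin d))
    (hθ0 : ∀ ω, θ 0 ω = 0)
    (hθ : ∀ k ω, θ (k + 1) ω = θ k ω + (α * c (k + 1) ω) • ξ (k + 1) ω)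
    (v : EuclideanSpace ℝ (Fin d)) (hv : ‖v‖ = 1) (hvμ : ⟪v, μ⟫_ℝ = 0)
    (T : Ω → ℕ) (hT : IsStoppingTime (MeasureTheory.Filtration.natural ξ hmeas) (fun ω => (T ω : WithTop ℕ)))
    (hTint : Integrable (fun ω => (T ω : ℝ)) P) :
    ∫ ω, |⟪v, θ (T ω) ω⟫_ℝ| ∂P ≤
      σ * α * Real.sqrt (2 / Real.pi) * ∫ ω, (T ω : ℝ) ∂P := by
  classical
  set F := MeasureTheory.Filtration.natural ξ hmeas with hF
  set m : ℝ := σ * Real.sqrt (2 / Real.pi) with hm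
  have hm0 : 0 ≤ m := mul_nonneg hσ.le (Real.sqrt_nonneg _)
  -- measurability of basic objects
  have hξm : ∀ k, Measurable fun ω => ⟪v, ξ k ω⟫_ℝ :=
    fun k => measurable_const.inner (hmeas k).measurable
  have hθm : ∀ k, Measurable (θ k) := by
    intro k
    induction k with
    | zero =>
      have : θ 0 = fun _ => (0 : EuclideanSpace ℝ (Fin d)) := funext hθ0
      rw [this]; exact measurable_const
    | succ k ih =>
      have : θ (k + 1) = fun ω => θ k ω + (α * c (k + 1) ω) • ξ (k + 1) ω :=
        funext (hθ k)
      rw [this]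
      exact ih.add ((measurable_const.mul
        ((hcmeas (k + 1)).mono (F.le _) le_rfl)).smul (hmeas (k + 1)).measurable)
  have hTm : Measurable T := by
    refine measurable_to_countable' fun n => ?_
    exact F.le n _ (by simpa [Set.preimage] using hT.measurableSet_eq n)
  have hstop : Measurable fun ω => ⟪v, θ (T ω) ω⟫_ℝ := by
    have hprod : Measurable fun p : Ω × ℕ => ⟪v, θ p.2 p.1⟫_ℝ :=
      measurable_from_prod_countable_left fun n => measurable_const.inner (hθm n)
    exact hprod.comp (measurable_id.prodMk hTm)
  -- Step A : pointwise bound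
  have hA : ∀ n ω, |⟪v, θ n ω⟫_ℝ| ≤ α * ∑ k ∈ Finset.range n, |⟪v, ξ (k+1) ω⟫_ℝ| := by
    intro n ω
    induction n with
    | zero => simp [hθ0]
    | succ n ih =>
      rw [hθ n ω, Finset.sum_range_succ, mul_add]
      calc |⟪v, θ n ω + (α * c (n+1) ω) • ξ (n+1) ω⟫_ℝ|
          = |⟪v, θ n ω⟫_ℝ + (α * c (n+1) ω) * ⟪v, ξ (n+1) ω⟫_ℝ| := by
            rw [inner_add_right, real_inner_smul_right]
        _ ≤ |⟪v, θ n ω⟫_ℝ| + |(α * c (n+1) ω) * ⟪v, ξ (n+1) ω⟫_ℝ| := abs_add_le _ _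
        _ ≤ (α * ∑ k ∈ Finset.range n, |⟪v, ξ (k+1) ω⟫_ℝ|) + α * |⟪v, ξ (n+1) ω⟫_ℝ| := by
            refine add_le_add ih ?_
            rw [abs_mul, abs_of_nonneg (mul_nonneg hα.le (hc01 (n+1) ω).1)]
            have h1 : α * c (n+1) ω ≤ α := by
              nlinarith [(hc01 (n+1) ω).2, hα]
            exact mul_le_mul_of_nonneg_right h1 (abs_nonneg _)
  -- notation for the ENNReal computations
  set Y : ℕ → Ω → ENNReal := fun k ω => ENNReal.ofReal |⟪v, ξ k ω⟫_ℝ| with hY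
  set A : ℕ → Set Ω := fun k => {ω | k < T ω} with hAdef
  have hYm : ∀ k, Measurable (Y k) := fun k => (hξm k).abs.ennreal_ofReal
  have hAm : ∀ k, MeasurableSet[F k] (A k) := by
    intro k
    have h1 : A k = {ω | T ω ≤ k}ᶜ := by
      ext ω; simp [hAdef, not_le]
    rw [h1]
    simpa using (hT k).compl
  have hAm0 : ∀ k, MeasurableSet[m0] (A k) := fun k => F.le k _ (hAm k)
  -- law of Y k
  have hYlint : ∀ k, ∫⁻ ω, Y k ω ∂P = ENNReal.ofReal m := by
    intro k
    have hmap := (hgauss k) v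
    rw [hvμ, hv] at hmap
    simp only [one_pow, mul_one] at hmap
    calc ∫⁻ ω, Y k ω ∂P
        = ∫⁻ x, ENNReal.ofReal |x| ∂(Measure.map (fun ω => ⟪v, ξ k ω⟫_ℝ) P) := by
          rw [lintegral_map measurable_abs.ennreal_ofReal (hξm k)]
      _ = ENNReal.ofReal m := by rw [hmap, hm]; exact my_lintegral_abs_gaussianReal hσ
  -- independence of ξ (k+1) from F k
  have hIndep : ∀ k, Indep (MeasurableSpace.comap (ξ (k+1)) inferInstance) (F k) P := by
    intro k
    have hle : ∀ i, MeasurableSpace.comap (ξ i) inferInstance ≤ m0 :=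
      fun i => (hmeas i).measurable.comap_le
    have h := indep_iSup_of_disjoint (m := fun i => MeasurableSpace.comap (ξ i) inferInstance)
      hle hindep (S := {k+1}) (T := {i | i ≤ k})
      (by simp only [Set.disjoint_left, Set.mem_singleton_iff, Set.mem_setOf_eq]
          rintro i rfl; omega)
    have h1 : (⨆ i ∈ ({k+1} : Set ℕ), MeasurableSpace.comap (ξ i) inferInstance)
        = MeasurableSpace.comap (ξ (k+1)) inferInstance := by
      simp
    have h2 : (⨆ i ∈ {i : ℕ | i ≤ k}, MeasurableSpace.comap (ξ i) inferInstance) = F k := rfl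
    rwa [h1, h2] at h
  -- key computation
  have hkey : ∀ k, ∫⁻ ω, (A k).indicator (Y (k+1)) ω ∂P = ENNReal.ofReal m * P (A k) := by
    intro k
    have heq : ∀ ω, (A k).indicator (Y (k+1)) ω
        = Y (k+1) ω * (A k).indicator (1 : Ω → ENNReal) ω := by
      intro ω
      by_cases hω : ω ∈ A k <;> simp [hω]
    rw [lintegral_congr heq]
    have hYcomap : Measurable[MeasurableSpace.comap (ξ (k+1)) inferInstance] (Y (k+1)) := by
      have : Measurable fun x : EuclideanSpace ℝ (Fin d) => ENNReal.ofReal |⟪v, x⟫_ℝ| :=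
        (measurable_const.inner measurable_id).abs.ennreal_ofReal
      exact this.comp (Measurable.of_comap_le le_rfl)
    have hgmeas : Measurable[F k] ((A k).indicator (1 : Ω → ENNReal)) :=
      measurable_const.indicator (hAm k)
    rw [lintegral_mul_eq_lintegral_mul_lintegral_of_independent_measurableSpace
      ((hmeas (k+1)).measurable.comap_le) (F.le k) (hIndep k) hYcomap hgmeas]
    rw [hYlint (k+1), lintegral_indicator_one (hAm0 k)]
  -- sum of the probabilities equals E[T]
  have hsumT : ∑' k, P (A k) = ∫⁻ ω, (T ω : ENNReal) ∂P := by
    have h1 : ∀ k, P (A k) = ∫⁻ ω, (A k).indicator (1 : Ω → ENNReal) ω ∂P :=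
      fun k => (lintegral_indicator_one (hAm0 k)).symm
    rw [tsum_congr h1]
    rw [← lintegral_tsum (f := fun k => (A k).indicator (1 : Ω → ENNReal))
      (fun k => (measurable_const.indicator (hAm0 k)).aemeasurable)]
    refine lintegral_congr fun ω => ?_
    have h2 : ∀ k, (A k).indicator (1 : Ω → ENNReal) ω
        = if k ∈ Finset.range (T ω) then (1 : ENNReal) else 0 := by
      intro k
      by_cases hk : k < T ω <;> simp [hAdef, Set.indicator, hk]
    rw [tsum_congr h2, tsum_eq_sum (s := Finset.range (T ω)) (fun k hk => by simp [hk]),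
      Finset.sum_congr rfl (fun k hk => if_pos hk)]
    simp
  -- putting it together in ENNReal
  have hmain : ∫⁻ ω, ENNReal.ofReal |⟪v, θ (T ω) ω⟫_ℝ| ∂P
      ≤ ENNReal.ofReal α * ENNReal.ofReal m * ∫⁻ ω, (T ω : ENNReal) ∂P := by
    have step1 : ∫⁻ ω, ENNReal.ofReal |⟪v, θ (T ω) ω⟫_ℝ| ∂P
        ≤ ∫⁻ ω, ENNReal.ofReal α * ∑' k, (A k).indicator (Y (k+1)) ω ∂P := by
      refine lintegral_mono fun ω => ?_
      have h2 : ∀ k, (A k).indicator (Y (k+1)) ω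
          = if k ∈ Finset.range (T ω) then Y (k+1) ω else 0 := by
        intro k
        by_cases hk : k < T ω <;> simp [hAdef, Set.indicator, hk]
      rw [tsum_congr h2, tsum_eq_sum (s := Finset.range (T ω)) (fun k hk => by simp [hk])]
      simp only [Finset.sum_ite_mem, Finset.inter_self]
      calc ENNReal.ofReal |⟪v, θ (T ω) ω⟫_ℝ|
          ≤ ENNReal.ofReal (α * ∑ k ∈ Finset.range (T ω), |⟪v, ξ (k+1) ω⟫_ℝ|) :=
            ENNReal.ofReal_le_ofReal (hA (T ω) ω)
        _ = ENNReal.ofReal α * ∑ k ∈ Finset.range (T ω), Y (k+1) ω := by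
            rw [ENNReal.ofReal_mul hα.le, ENNReal.ofReal_sum_of_nonneg
              (fun k _ => abs_nonneg _)]
    have step2 : ∫⁻ ω, ENNReal.ofReal α * ∑' k, (A k).indicator (Y (k+1)) ω ∂P
        = ENNReal.ofReal α * ENNReal.ofReal m * ∫⁻ ω, (T ω : ENNReal) ∂P := by
      rw [lintegral_const_mul _ (by
        exact Measurable.ennreal_tsum fun k => (hYm (k+1)).indicator (hAm0 k))]
      rw [lintegral_tsum (fun k => ((hYm (k+1)).indicator (hAm0 k)).aemeasurable)]
      rw [tsum_congr hkey, ENNReal.tsum_mul_left, hsumT, mul_assoc]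
    exact step1.trans_eq step2
  -- back to real integrals
  have hTlint : ∫⁻ ω, (T ω : ENNReal) ∂P = ENNReal.ofReal (∫ ω, (T ω : ℝ) ∂P) := by
    rw [ofReal_integral_eq_lintegral_ofReal hTint
      (Filter.Eventually.of_forall fun ω => Nat.cast_nonneg _)]
    refine lintegral_congr fun ω => ?_
    rw [ENNReal.ofReal_natCast]
  have hLHS : ∫ ω, |⟪v, θ (T ω) ω⟫_ℝ| ∂P
      = (∫⁻ ω, ENNReal.ofReal |⟪v, θ (T ω) ω⟫_ℝ| ∂P).toReal := by
    rw [integral_eq_lintegral_of_nonneg_ae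
      (Filter.Eventually.of_forall fun ω => abs_nonneg _)
      hstop.abs.aestronglyMeasurable]
  rw [hLHS]
  have hInt0 : 0 ≤ ∫ ω, (T ω : ℝ) ∂P := integral_nonneg fun ω => Nat.cast_nonneg _
  have hfin : ENNReal.ofReal α * ENNReal.ofReal m * ENNReal.ofReal (∫ ω, (T ω : ℝ) ∂P) ≠ ⊤ := by
    exact ENNReal.mul_ne_top (ENNReal.mul_ne_top ENNReal.ofReal_ne_top ENNReal.ofReal_ne_top)
      ENNReal.ofReal_ne_top
  have := ENNReal.toReal_mono hfin (hTlint ▸ hmain)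
  refine this.trans_eq ?_
  rw [ENNReal.toReal_mul, ENNReal.toReal_mul, ENNReal.toReal_ofReal hα.le,
    ENNReal.toReal_ofReal hm0, ENNReal.toReal_ofReal hInt0, hm]
  ring
end

section
/- Let f(θ) = E[ℓ(ξᵀθ)] where ξ ~ N(μ, σ²I), μ ≠ 0, σ > 0, and ℓ is either the logistic loss ℓ(x) = −x + log(1 + eˣ) at label 1 (i.e. ℓ(x) = log(1+e^{−x})) or the hinge loss ℓ(x) = max(1−x, 0). Decompose θ = ρμ + θ̃ with μᵀθ̃ = 0. Then f(θ) ≥ f(ρμ). -/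
open MeasureTheory ProbabilityTheory
open scoped InnerProductSpace

noncomputable section AuxLoss

/-- Logistic loss is convex. -/
lemma logistic_convex : ConvexOn ℝ Set.univ (fun x : ℝ => Real.log (1 + Real.exp (-x))) := by
  have hd : ∀ x : ℝ, HasDerivAt (fun x : ℝ => Real.log (1 + Real.exp (-x)))
      (-(Real.exp x + 1)⁻¹) x := by
    intro x
    have h1 : HasDerivAt (fun x : ℝ => 1 + Real.exp (-x)) (-Real.exp (-x)) x := by
      have := ((hasDerivAt_id x).neg.exp).const_add 1
      simpa using this
    have h2 := h1.log (by positivity)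
    convert h2 using 1
    have hx : Real.exp (-x) * (Real.exp x + 1) = 1 + Real.exp (-x) := by
      rw [mul_add, ← Real.exp_add]
      simp [add_comm]
    field_simp
    nlinarith [Real.exp_pos x, Real.exp_pos (-x), hx]
  have hdiff : Differentiable ℝ (fun x : ℝ => Real.log (1 + Real.exp (-x))) :=
    fun x => (hd x).differentiableAt
  have hderiv : deriv (fun x : ℝ => Real.log (1 + Real.exp (-x)))
      = fun x => -(Real.exp x + 1)⁻¹ := funext fun x => (hd x).deriv
  refine Monotone.convexOn_univ_of_deriv hdiff ?_
  rw [hderiv]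
  intro a b hab
  have : (Real.exp b + 1)⁻¹ ≤ (Real.exp a + 1)⁻¹ := by
    apply inv_anti₀ (by positivity)
    have := Real.exp_le_exp.mpr hab
    linarith
  linarith

lemma hinge_convex : ConvexOn ℝ Set.univ (fun x : ℝ => max (1 - x) 0) := by
  have h1 : ConvexOn ℝ Set.univ (fun x : ℝ => 1 - x) := by
    refine ⟨convex_univ, ?_⟩
    intro x _ y _ a b _ _ hab
    simp only [smul_eq_mul]
    nlinarith
  have h2 : ConvexOn ℝ Set.univ (fun _ : ℝ => (0 : ℝ)) := convexOn_const _ convex_univ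
  exact h1.sup h2

lemma loss_props (ℓ : ℝ → ℝ)
    (hℓ : (∀ x, ℓ x = Real.log (1 + Real.exp (-x))) ∨ (∀ x, ℓ x = max (1 - x) 0)) :
    Continuous ℓ ∧ ConvexOn ℝ Set.univ ℓ ∧ ∀ x, |ℓ x| ≤ 1 + |x| := by
  rcases hℓ with h | h
  · have hfun : ℓ = fun x => Real.log (1 + Real.exp (-x)) := funext h
    subst hfun
    refine ⟨?_, logistic_convex, ?_⟩
    · exact (continuous_const.add (Real.continuous_exp.comp continuous_neg)).log
        fun x => by have := Real.exp_pos (-x); show 1 + Real.exp (-x) ≠ 0; positivity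
    · intro x
      have h0 : 0 ≤ Real.log (1 + Real.exp (-x)) :=
        Real.log_nonneg (by nlinarith [Real.exp_pos (-x)])
      rw [abs_of_nonneg h0]
      have hle : 1 + Real.exp (-x) ≤ 2 * Real.exp |x| := by
        have h1 : Real.exp (-x) ≤ Real.exp |x| := Real.exp_le_exp.mpr (neg_le_abs x)
        have h2 : (1:ℝ) ≤ Real.exp |x| := Real.one_le_exp (abs_nonneg x)
        linarith
      calc Real.log (1 + Real.exp (-x)) ≤ Real.log (2 * Real.exp |x|) :=
            Real.log_le_log (by positivity) hle
        _ = Real.log 2 + |x| := by rw [Real.log_mul (by norm_num) (Real.exp_ne_zero _),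
            Real.log_exp]
        _ ≤ 1 + |x| := by
            have := Real.log_le_sub_one_of_pos (by norm_num : (0:ℝ) < 2)
            linarith
  · have hfun : ℓ = fun x => max (1 - x) 0 := funext h
    subst hfun
    refine ⟨by continuity, hinge_convex, ?_⟩
    intro x
    rw [abs_of_nonneg (le_max_right _ _)]
    have : 1 - x ≤ 1 + |x| := by
      have := neg_abs_le x; linarith
    have h2 : (0:ℝ) ≤ 1 + |x| := by positivity
    exact max_le this h2

/-- |z| is integrable wrt the standard gaussian. -/
lemma integrable_abs_gauss : Integrable (fun z : ℝ => |z|) (gaussianReal 0 1) := by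
  rw [gaussianReal_of_var_ne_zero 0 one_ne_zero]
  rw [integrable_withDensity_iff (measurable_gaussianPDF 0 1)
    (Filter.Eventually.of_forall fun x => ENNReal.ofReal_lt_top)]
  have heq : ∀ x : ℝ, |x| * (gaussianPDF 0 1 x).toReal
      = (Real.sqrt (2 * Real.pi))⁻¹ * |x * Real.exp (-(1/2) * x ^ 2)| := by
    intro x
    rw [gaussianPDF, ENNReal.toReal_ofReal (gaussianPDFReal_nonneg 0 1 x), gaussianPDFReal]
    rw [abs_mul, abs_of_nonneg (Real.exp_nonneg _)]
    push_cast
    ring_nf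
  simp_rw [heq]
  exact ((integrable_mul_exp_neg_mul_sq (by norm_num : (0:ℝ) < 1/2)).abs).const_mul _

lemma integrable_affine_loss (ℓ : ℝ → ℝ) (hc : Continuous ℓ) (hb : ∀ x, |ℓ x| ≤ 1 + |x|)
    (a b : ℝ) : Integrable (fun z : ℝ => ℓ (b * z + a)) (gaussianReal 0 1) := by
  have hmaj : Integrable (fun z : ℝ => (1 + |a|) + |b| * |z|) (gaussianReal 0 1) :=
    (integrable_const _).add (integrable_abs_gauss.const_mul _)
  refine hmaj.mono ((hc.comp (by continuity)).aestronglyMeasurable) ?_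
  refine Filter.Eventually.of_forall fun z => ?_
  have h1 : |ℓ (b * z + a)| ≤ 1 + |b * z + a| := hb _
  have h2 : |b * z + a| ≤ |b| * |z| + |a| := by
    calc |b * z + a| ≤ |b * z| + |a| := abs_add_le _ _
      _ = |b| * |z| + |a| := by rw [abs_mul]
  have h3 : (0:ℝ) ≤ (1 + |a|) + |b| * |z| := by positivity
  rw [Real.norm_eq_abs, Real.norm_eq_abs, abs_of_nonneg h3]
  linarith

lemma gauss_affine_map (a b : ℝ) :
    Measure.map (fun z : ℝ => b * z + a) (gaussianReal 0 1)
      = gaussianReal a ((b ^ 2).toNNReal) := by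
  have h1 : (fun z : ℝ => b * z + a) = (fun y : ℝ => y + a) ∘ (fun z : ℝ => b * z) := rfl
  rw [h1, ← Measure.map_map (measurable_add_const a) (measurable_const_mul b)]
  rw [gaussianReal_map_const_mul b, gaussianReal_map_add_const a]
  congr 1
  · simp
  · ext
    simp [Real.toNNReal, max_eq_left (sq_nonneg b)]

lemma gauss_map_neg : Measure.map (fun z : ℝ => -z) (gaussianReal 0 1) = gaussianReal 0 1 := by
  have h1 : (fun z : ℝ => -z) = fun z : ℝ => (-1 : ℝ) * z := by funext z; ring
  rw [h1, gaussianReal_map_const_mul (-1 : ℝ)]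
  norm_num

lemma gauss_sym (ℓ : ℝ → ℝ) (hc : Continuous ℓ) (s m : ℝ) :
    ∫ z, ℓ (s * z + m) ∂(gaussianReal 0 1) = ∫ z, ℓ (-(s * z) + m) ∂(gaussianReal 0 1) := by
  have hcont : Continuous fun z : ℝ => ℓ (s * z + m) := by continuity
  conv_lhs => rw [← gauss_map_neg]
  rw [integral_map measurable_neg.aemeasurable hcont.aestronglyMeasurable]
  congr 1
  funext z
  ring_nf

lemma ptwise_convex (ℓ : ℝ → ℝ) (hconv : ConvexOn ℝ Set.univ ℓ) {s₁ s₂ : ℝ}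
    (h0 : 0 ≤ s₁) (h : s₁ ≤ s₂) (m u : ℝ) :
    ℓ (s₁ * u + m) + ℓ (-(s₁ * u) + m) ≤ ℓ (s₂ * u + m) + ℓ (-(s₂ * u) + m) := by
  rcases eq_or_lt_of_le (h0.trans h) with hs2 | hs2
  · have hs1 : s₁ = 0 := le_antisymm (h.trans hs2.ge) h0
    rw [hs1, ← hs2]
  · set t := (s₂ + s₁) / (2 * s₂) with ht_def
    set t' := (s₂ - s₁) / (2 * s₂) with ht'_def
    have ht : 0 ≤ t := by
      apply div_nonneg (by linarith) (by linarith)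
    have ht' : 0 ≤ t' := by
      apply div_nonneg (by linarith) (by linarith)
    have htt : t + t' = 1 := by
      rw [ht_def, ht'_def]
      field_simp [ht_def, ht'_def]
      ring
    have e1 : t * (s₂ * u + m) + t' * (-(s₂ * u) + m) = s₁ * u + m := by
      rw [ht_def, ht'_def]
      field_simp [ht_def, ht'_def]
      ring
    have e2 : t' * (s₂ * u + m) + t * (-(s₂ * u) + m) = -(s₁ * u) + m := by
      rw [ht_def, ht'_def]
      field_simp [ht_def, ht'_def]
      ring
    have c1 := hconv.2 (Set.mem_univ (s₂ * u + m)) (Set.mem_univ (-(s₂ * u) + m)) ht ht' htt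
    have c2 := hconv.2 (Set.mem_univ (s₂ * u + m)) (Set.mem_univ (-(s₂ * u) + m)) ht' ht
      (by linarith)
    simp only [smul_eq_mul] at c1 c2
    rw [e1] at c1
    rw [e2] at c2
    have hmul : (t + t') * (ℓ (s₂ * u + m) + ℓ (-(s₂ * u) + m))
        = ℓ (s₂ * u + m) + ℓ (-(s₂ * u) + m) := by rw [htt]; ring
    linarith [c1, c2, hmul]

lemma gauss_cmp (ℓ : ℝ → ℝ) (hc : Continuous ℓ) (hbd : ∀ x, |ℓ x| ≤ 1 + |x|)
    (hconv : ConvexOn ℝ Set.univ ℓ) {m s₁ s₂ : ℝ} (h0 : 0 ≤ s₁) (h : s₁ ≤ s₂) :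
    ∫ z, ℓ (s₁ * z + m) ∂(gaussianReal 0 1) ≤ ∫ z, ℓ (s₂ * z + m) ∂(gaussianReal 0 1) := by
  have hint : ∀ b : ℝ, Integrable (fun z : ℝ => ℓ (b * z + m)) (gaussianReal 0 1) :=
    fun b => integrable_affine_loss ℓ hc hbd m b
  have hneg : ∀ s : ℝ, (fun z : ℝ => ℓ (-(s * z) + m)) = fun z : ℝ => ℓ ((-s) * z + m) := by
    intro s; funext z; rw [neg_mul]
  have hint' : ∀ s : ℝ, Integrable (fun z : ℝ => ℓ (-(s * z) + m)) (gaussianReal 0 1) := by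
    intro s; rw [hneg s]; exact hint (-s)
  have key : ∫ z, (ℓ (s₁ * z + m) + ℓ (-(s₁ * z) + m)) ∂(gaussianReal 0 1)
      ≤ ∫ z, (ℓ (s₂ * z + m) + ℓ (-(s₂ * z) + m)) ∂(gaussianReal 0 1) := by
    refine integral_mono ((hint s₁).add (hint' s₁)) ((hint s₂).add (hint' s₂)) ?_
    intro u
    exact ptwise_convex ℓ hconv h0 h m u
  rw [integral_add (hint s₁) (hint' s₁), integral_add (hint s₂) (hint' s₂)] at key
  rw [← gauss_sym ℓ hc s₁ m, ← gauss_sym ℓ hc s₂ m] at key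
  linarith

end AuxLoss


theorem orthogonal_component_increases_loss
    {Ω : Type*} [MeasurableSpace Ω] {d : ℕ} (P : Measure Ω) [IsProbabilityMeasure P]
    (ξ : Ω → EuclideanSpace ℝ (Fin d)) (μ : EuclideanSpace ℝ (Fin d)) (σ : ℝ)
    (hσ : 0 < σ) (hμ : μ ≠ 0) (hmeas : Measurable ξ) (hξ : IsGaussianVec P ξ μ σ)
    (ℓ : ℝ → ℝ)
    (hℓ : (∀ x, ℓ x = Real.log (1 + Real.exp (-x))) ∨ (∀ x, ℓ x = max (1 - x) 0))
    (θ θt : EuclideanSpace ℝ (Fin d)) (ρ : ℝ)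
    (hdecomp : θ = ρ • μ + θt) (horth : ⟪μ, θt⟫_ℝ = 0) :
    ∫ ω, ℓ ⟪ρ • μ, ξ ω⟫_ℝ ∂P ≤ ∫ ω, ℓ ⟪θ, ξ ω⟫_ℝ ∂P := by
  obtain ⟨hc, hconv, hbd⟩ := loss_props ℓ hℓ
  -- rewrite both integrals as integrals against the standard gaussian
  have key : ∀ v : EuclideanSpace ℝ (Fin d),
      ∫ ω, ℓ ⟪v, ξ ω⟫_ℝ ∂P
        = ∫ z, ℓ (σ * ‖v‖ * z + ⟪v, μ⟫_ℝ) ∂(gaussianReal 0 1) := by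
    intro v
    have hminner : Measurable fun ω => ⟪v, ξ ω⟫_ℝ := measurable_const.inner hmeas
    have h1 : ∫ ω, ℓ ⟪v, ξ ω⟫_ℝ ∂P
        = ∫ x, ℓ x ∂(Measure.map (fun ω => ⟪v, ξ ω⟫_ℝ) P) :=
      (integral_map hminner.aemeasurable hc.aestronglyMeasurable).symm
    rw [h1, hξ v]
    have h2 : (σ ^ 2 * ‖v‖ ^ 2).toNNReal = ((σ * ‖v‖) ^ 2).toNNReal := by
      rw [mul_pow]
    rw [h2, ← gauss_affine_map ⟪v, μ⟫_ℝ (σ * ‖v‖)]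
    have hmaff : Measurable fun z : ℝ => σ * ‖v‖ * z + ⟪v, μ⟫_ℝ :=
      (measurable_id.const_mul _).add_const _
    rw [integral_map hmaff.aemeasurable hc.aestronglyMeasurable]
  rw [key, key]
  have hm : ⟪θ, μ⟫_ℝ = ⟪ρ • μ, μ⟫_ℝ := by
    have h0 : ⟪θt, μ⟫_ℝ = 0 := by rw [real_inner_comm]; exact horth
    rw [hdecomp, inner_add_left, h0, add_zero]
  rw [hm]
  have hnorm : ‖ρ • μ‖ ≤ ‖θ‖ := by
    have hp : ‖θ‖ ^ 2 = ‖ρ • μ‖ ^ 2 + ‖θt‖ ^ 2 := by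
      rw [hdecomp, @norm_add_sq_real, real_inner_smul_left, horth]
      ring
    nlinarith [norm_nonneg θ, norm_nonneg (ρ • μ), norm_nonneg θt, sq_nonneg (‖θ‖ - ‖ρ • μ‖)]
  exact gauss_cmp ℓ hc hbd hconv (by positivity)
    (mul_le_mul_of_nonneg_left hnorm hσ.le)
end
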